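/- arXiv:2006.13708 — 2 statements merged into one kernel-verified Lean document; each statement's English description precedes it below -/
import Mathlib

section
/- Under the hypotheses of the (2rC_φ)-Lipschitz property of the invariant layer f_φ, let τ: ℝ^d → ℝ^d and ξ: ℝ^r → ℝ^r be Lipschitz maps. Then for every probability measure α supported on a compact set Ω ⊂ ℝ^d: W̄₁(ξ♯ f_φ(τ♯α), f_φ(α)) ≤ sup_{y ∈ f_φ(τ(Ω))} ‖ξ(y) − y‖₂ + 2r·Lip(φ)·sup_{x ∈ Ω} ‖τ(x) − x‖₂. -/
open MeasureTheory NNReal ENNReal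

noncomputable def W1 {E : Type*} [MeasurableSpace E] [PseudoMetricSpace E]
    (α β : Measure E) : ℝ :=
  ⨅ π : {π : Measure (E × E) // π.map Prod.fst = α ∧ π.map Prod.snd = β},
    ∫ p, dist p.1 p.2 ∂(π : Measure (E × E))

noncomputable def permMap {d : ℕ} (σ : Equiv.Perm (Fin d)) :
    EuclideanSpace ℝ (Fin d) → EuclideanSpace ℝ (Fin d) :=
  fun x => (WithLp.toLp 2 (fun i => x (σ i)) : EuclideanSpace ℝ (Fin d))

noncomputable def W1bar {d : ℕ} (G : Subgroup (Equiv.Perm (Fin d)))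
    (α β : Measure (EuclideanSpace ℝ (Fin d))) : ℝ :=
  ⨅ σ : G, W1 (α.map (permMap (σ : Equiv.Perm (Fin d)))) β

/-- The invariant layer: pushforward of α by x ↦ ∫ φ(x,x') dα(x'). -/
noncomputable def invLayer {d r : ℕ}
    (φ : EuclideanSpace ℝ (Fin d) → EuclideanSpace ℝ (Fin d) → EuclideanSpace ℝ (Fin r))
    (α : Measure (EuclideanSpace ℝ (Fin d))) : Measure (EuclideanSpace ℝ (Fin r)) :=
  α.map (fun x => ∫ x', φ x x' ∂α)

lemma aux_integrable {n m : ℕ} (μ : Measure (EuclideanSpace ℝ (Fin n))) [IsFiniteMeasure μ]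
    {K : Set (EuclideanSpace ℝ (Fin n))} (hK : IsCompact K) (hμK : μ Kᶜ = 0)
    {f : EuclideanSpace ℝ (Fin n) → EuclideanSpace ℝ (Fin m)} (hf : Continuous f) :
    Integrable f μ := by
  obtain ⟨C, hC⟩ := hK.exists_bound_of_continuousOn hf.continuousOn
  have hae : ∀ᵐ x ∂μ, x ∈ K := by
    rw [ae_iff]; exact hμK
  exact (integrable_const C).mono' hf.aestronglyMeasurable (hae.mono fun x hx => hC x hx)

lemma aux_lip {d r : ℕ} (Cφ : ℝ≥0)
    (φ : EuclideanSpace ℝ (Fin d) → EuclideanSpace ℝ (Fin d) → EuclideanSpace ℝ (Fin r))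
    (hLip1 : ∀ z, LipschitzWith Cφ (φ z))
    (μ : Measure (EuclideanSpace ℝ (Fin d))) [IsProbabilityMeasure μ]
    (hLip2 : ∀ z, LipschitzWith Cφ (fun w => φ w z))
    {K : Set (EuclideanSpace ℝ (Fin d))} (hK : IsCompact K) (hμK : μ Kᶜ = 0) :
    LipschitzWith Cφ (fun x => ∫ x', φ x x' ∂μ) := by
  apply LipschitzWith.of_dist_le_mul
  intro x y
  have hix : Integrable (φ x) μ := aux_integrable μ hK hμK (hLip1 x).continuous
  have hiy : Integrable (φ y) μ := aux_integrable μ hK hμK (hLip1 y).continuous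
  simp only [dist_eq_norm]
  rw [← integral_sub hix hiy]
  calc ‖∫ x', φ x x' - φ y x' ∂μ‖ ≤ (Cφ * ‖x - y‖) * (μ Set.univ).toReal :=
        norm_integral_le_of_norm_le_const (ae_of_all _ fun x' => by
          rw [← dist_eq_norm, ← dist_eq_norm]; exact (hLip2 x').dist_le_mul x y)
    _ = Cφ * ‖x - y‖ := by simp


lemma le_biSup_real {ι : Type*} {s : Set ι} {f : ι → ℝ} (hb : BddAbove (f '' s)) {c : ι}
    (hc : c ∈ s) : f c ≤ ⨆ i ∈ s, f i := by
  obtain ⟨B, hB⟩ := hb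
  have hB' : ∀ i, (⨆ _ : i ∈ s, f i) ≤ max B 0 := by
    intro i
    rcases Classical.em (i ∈ s) with hi | hi
    · haveI : Nonempty (i ∈ s) := ⟨hi⟩
      rw [ciSup_const]
      exact le_max_of_le_left (hB ⟨i, hi, rfl⟩)
    · haveI : IsEmpty (i ∈ s) := ⟨hi⟩
      rw [Real.iSup_of_isEmpty]
      exact le_max_right _ _
  calc f c = ⨆ _ : c ∈ s, f c := by
        haveI : Nonempty (c ∈ s) := ⟨hc⟩
        rw [ciSup_const]
    _ ≤ ⨆ i, ⨆ _ : i ∈ s, f i :=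
        le_ciSup (f := fun i => ⨆ _ : i ∈ s, f i)
          ⟨max B 0, by rintro y ⟨i, rfl⟩; exact hB' i⟩ c

/-- stability of the invariant layer under perturbations τ of the input
space and ξ of the output space:
W̄₁(ξ♯ f_φ(τ♯α), f_φ(α)) ≤ sup_{y ∈ f_φ(τ(Ω))} ‖ξ(y)−y‖ + 2r Lip(φ) sup_{x∈Ω} ‖τ(x)−x‖. -/
theorem invariant_layer_perturbation {d r : ℕ} (G : Subgroup (Equiv.Perm (Fin d)))
    (Cφ Cτ Cξ : ℝ≥0)
    (φ : EuclideanSpace ℝ (Fin d) → EuclideanSpace ℝ (Fin d) → EuclideanSpace ℝ (Fin r))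
    (hLip1 : ∀ z, LipschitzWith Cφ (φ z))
    (hLip2 : ∀ z, LipschitzWith Cφ (fun w => φ w z))
    (hinv : ∀ σ ∈ G, ∀ z₁ z₂, φ (permMap σ z₁) (permMap σ z₂) = φ z₁ z₂)
    (τ : EuclideanSpace ℝ (Fin d) → EuclideanSpace ℝ (Fin d))
    (ξ : EuclideanSpace ℝ (Fin r) → EuclideanSpace ℝ (Fin r))
    (hτ : LipschitzWith Cτ τ) (hξ : LipschitzWith Cξ ξ)
    (Ω : Set (EuclideanSpace ℝ (Fin d))) (hΩ : IsCompact Ω)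
    (α : Measure (EuclideanSpace ℝ (Fin d))) [IsProbabilityMeasure α] (hαΩ : α Ωᶜ = 0) :
    W1bar (⊥ : Subgroup (Equiv.Perm (Fin r))) ((invLayer φ (α.map τ)).map ξ) (invLayer φ α)
      ≤ (⨆ y ∈ (fun x => ∫ x', φ x x' ∂(α.map τ)) '' (τ '' Ω), ‖ξ y - y‖)
        + 2 * r * Cφ * ⨆ x ∈ Ω, ‖τ x - x‖ := by
  have hτc : Continuous τ := hτ.continuous
  have hτm : Measurable τ := hτc.measurable
  have hξm : Measurable ξ := hξ.continuous.measurable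
  have hβ : IsProbabilityMeasure (α.map τ) := Measure.isProbabilityMeasure_map hτm.aemeasurable
  have hae : ∀ᵐ x ∂α, x ∈ Ω := by rw [ae_iff]; exact hαΩ
  set K : Set (EuclideanSpace ℝ (Fin d)) := τ '' Ω with hKdef
  have hKc : IsCompact K := hΩ.image hτc
  have hβK : (α.map τ) Kᶜ = 0 := by
    rw [Measure.map_apply hτm hKc.isClosed.measurableSet.compl]
    refine measure_mono_null ?_ hαΩ
    intro x hx hxΩ
    exact hx (Set.mem_image_of_mem τ hxΩ)
  set g : EuclideanSpace ℝ (Fin d) → EuclideanSpace ℝ (Fin r) :=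
    fun x => ∫ x', φ x x' ∂(α.map τ) with hgdef
  set h : EuclideanSpace ℝ (Fin d) → EuclideanSpace ℝ (Fin r) :=
    fun x => ∫ x', φ x x' ∂α with hhdef
  have hg : LipschitzWith Cφ g := aux_lip Cφ φ hLip1 (α.map τ) hLip2 hKc hβK
  have hh : LipschitzWith Cφ h := aux_lip Cφ φ hLip1 α hLip2 hΩ hαΩ
  have hgm : Measurable g := hg.continuous.measurable
  have hhm : Measurable h := hh.continuous.measurable
  set u : EuclideanSpace ℝ (Fin d) → EuclideanSpace ℝ (Fin r) := fun x => ξ (g (τ x)) with hudef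
  have hum : Measurable u := hξm.comp (hgm.comp hτm)
  have hμ1 : ((invLayer φ (α.map τ)).map ξ) = α.map u := by
    simp only [invLayer, ← hgdef]
    rw [Measure.map_map hgm hτm, Measure.map_map hξm (hgm.comp hτm)]
    rfl
  have hμ2 : invLayer φ α = α.map h := rfl
  rw [hμ1, hμ2]
  -- reduce W1bar over the trivial group to W1
  have hbar : W1bar (⊥ : Subgroup (Equiv.Perm (Fin r))) (α.map u) (α.map h)
      = W1 (α.map u) (α.map h) := by
    rw [W1bar]
    haveI : Nonempty (⊥ : Subgroup (Equiv.Perm (Fin r))) := ⟨1⟩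
    have hc : ∀ σ : (⊥ : Subgroup (Equiv.Perm (Fin r))),
        W1 ((α.map u).map (permMap (σ : Equiv.Perm (Fin r)))) (α.map h)
          = W1 (α.map u) (α.map h) := by
      intro σ
      have hσ : (σ : Equiv.Perm (Fin r)) = 1 := Subgroup.mem_bot.mp σ.2
      have hid : permMap (1 : Equiv.Perm (Fin r)) = id := rfl
      rw [hσ, hid, Measure.map_id]
    rw [show (fun σ : (⊥ : Subgroup (Equiv.Perm (Fin r))) =>
        W1 ((α.map u).map (permMap (σ : Equiv.Perm (Fin r)))) (α.map h))
        = fun _ => W1 (α.map u) (α.map h) from funext hc]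
    exact ciInf_const
  rw [hbar]
  -- the coupling
  set π := α.map (fun x => (u x, h x)) with hπdef
  have hpm : Measurable fun x => (u x, h x) := hum.prodMk hhm
  have hfst : π.map Prod.fst = α.map u := by
    rw [hπdef, Measure.map_map measurable_fst hpm]; rfl
  have hsnd : π.map Prod.snd = α.map h := by
    rw [hπdef, Measure.map_map measurable_snd hpm]; rfl
  have hW1le : W1 (α.map u) (α.map h) ≤ ∫ p, dist p.1 p.2 ∂π := by
    refine ciInf_le ⟨0, ?_⟩ (⟨π, hfst, hsnd⟩ :
      {π' : Measure _ // π'.map Prod.fst = α.map u ∧ π'.map Prod.snd = α.map h})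
    rintro y ⟨π', rfl⟩
    exact integral_nonneg fun p => dist_nonneg
  have hint : ∫ p, dist p.1 p.2 ∂π = ∫ x, dist (u x) (h x) ∂α :=
    integral_map hpm.aemeasurable (continuous_fst.dist continuous_snd).aestronglyMeasurable
  set A := ⨆ y ∈ g '' K, ‖ξ y - y‖ with hA
  set S := ⨆ x ∈ Ω, ‖τ x - x‖ with hS
  have hΩne : Ω.Nonempty := by
    rcases Set.eq_empty_or_nonempty Ω with hE | hne
    · rw [hE, Set.compl_empty] at hαΩ
      simp [measure_univ] at hαΩ
    · exact hne
  have hbddS : BddAbove ((fun x => ‖τ x - x‖) '' Ω) :=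
    (hΩ.image ((hτc.sub continuous_id).norm)).bddAbove
  have hS0 : 0 ≤ S := by
    obtain ⟨x₀, hx₀⟩ := hΩne
    exact le_trans (norm_nonneg _) (le_biSup_real hbddS hx₀)
  have hbddA : BddAbove ((fun y => ‖ξ y - y‖) '' (g '' K)) :=
    ((hKc.image hg.continuous).image ((hξ.continuous.sub continuous_id).norm)).bddAbove
  have hptw : ∀ x ∈ Ω, dist (u x) (h x) ≤ A + 2 * r * Cφ * S := by
    intro x hx
    have h1 : dist (u x) (g (τ x)) ≤ A := by
      rw [dist_eq_norm]
      exact le_biSup_real hbddA ⟨τ x, Set.mem_image_of_mem τ hx, rfl⟩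
    have h2 : dist (g (τ x)) (h x) ≤ 2 * r * Cφ * S := by
      rcases Nat.eq_zero_or_pos r with hr | hr
      · subst hr
        rw [Subsingleton.elim (g (τ x)) (h x), dist_self]
        norm_num
      · have e1 : g (τ x) = ∫ x', φ (τ x) (τ x') ∂α := by
          simp only [hgdef]
          exact integral_map hτm.aemeasurable (hLip1 (τ x)).continuous.aestronglyMeasurable
        have i1 : Integrable (fun x' => φ (τ x) (τ x')) α :=
          aux_integrable α hΩ hαΩ ((hLip1 (τ x)).continuous.comp hτc)
        have i2 : Integrable (fun x' => φ x x') α := aux_integrable α hΩ hαΩ (hLip1 x).continuous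
        have e2 : h x = ∫ x', φ x x' ∂α := rfl
        rw [dist_eq_norm, e1, e2, ← integral_sub i1 i2]
        have key : ∀ᵐ x' ∂α, ‖φ (τ x) (τ x') - φ x x'‖ ≤ Cφ * S + Cφ * S := by
          filter_upwards [hae] with x' hx'
          calc ‖φ (τ x) (τ x') - φ x x'‖
              ≤ ‖φ (τ x) (τ x') - φ (τ x) x'‖ + ‖φ (τ x) x' - φ x x'‖ :=
                norm_sub_le_norm_sub_add_norm_sub _ _ _
            _ ≤ Cφ * ‖τ x' - x'‖ + Cφ * ‖τ x - x‖ := by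
                refine add_le_add ?_ ?_
                · rw [← dist_eq_norm, ← dist_eq_norm]
                  exact (hLip1 (τ x)).dist_le_mul _ _
                · rw [← dist_eq_norm, ← dist_eq_norm]
                  exact (hLip2 x').dist_le_mul _ _
            _ ≤ Cφ * S + Cφ * S := by
                refine add_le_add ?_ ?_
                · exact mul_le_mul_of_nonneg_left (le_biSup_real hbddS hx') Cφ.2
                · exact mul_le_mul_of_nonneg_left (le_biSup_real hbddS hx) Cφ.2
        calc ‖∫ x', φ (τ x) (τ x') - φ x x' ∂α‖
            ≤ (Cφ * S + Cφ * S) * (α Set.univ).toReal :=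
              norm_integral_le_of_norm_le_const key
          _ = 2 * Cφ * S := by simp; ring
          _ ≤ 2 * r * Cφ * S := by
              have h1r : (1 : ℝ) ≤ r := by exact_mod_cast hr
              nlinarith [hS0, Cφ.coe_nonneg, mul_nonneg (mul_nonneg (sub_nonneg.mpr h1r) Cφ.coe_nonneg) hS0]
    calc dist (u x) (h x) ≤ dist (u x) (g (τ x)) + dist (g (τ x)) (h x) := dist_triangle _ _ _
      _ ≤ A + 2 * r * Cφ * S := add_le_add h1 h2
  have hdist_int : ∫ x, dist (u x) (h x) ∂α ≤ A + 2 * r * Cφ * S := by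
    have hb : ∀ᵐ x ∂α, ‖dist (u x) (h x)‖ ≤ A + 2 * r * Cφ * S := by
      filter_upwards [hae] with x hx
      rw [Real.norm_eq_abs, abs_of_nonneg dist_nonneg]
      exact hptw x hx
    calc ∫ x, dist (u x) (h x) ∂α ≤ |∫ x, dist (u x) (h x) ∂α| := le_abs_self _
      _ = ‖∫ x, dist (u x) (h x) ∂α‖ := (Real.norm_eq_abs _).symm
      _ ≤ (A + 2 * r * Cφ * S) * (α Set.univ).toReal := norm_integral_le_of_norm_le_const hb
      _ = A + 2 * r * Cφ * S := by simp
  exact le_trans hW1le (le_of_le_of_eq (le_of_eq hint) rfl |>.trans hdist_int)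
end

section
/- The map sending the coefficients of a monic complex polynomial of degree d to its multiset of roots is 1/d-Hölder: there exists a constant C (depending on d and on a compact bound on the coefficients) such that for any two monic polynomials p, q of degree d with coefficients in a fixed compact set, the roots of p and q can be matched by a bijection so that each pair of matched roots differs by at most C·(max coefficient difference)^{1/d}. -/
set_option maxHeartbeats 1000000

open Polynomial Finset

namespace RootsHolderAux


lemma multiset_exists_enum {d : ℕ} (s : Multiset ℂ) (h : Multiset.card s = d) :
    ∃ x : Fin d → ℂ, s = Multiset.map x (Finset.univ : Finset (Fin d)).val := by
  obtain ⟨L, rfl⟩ : ∃ L : List ℂ, s = ↑L := ⟨s.toList, (Multiset.coe_toList s).symm⟩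
  have h' : L.length = d := by simpa using h
  subst h'
  exact ⟨L.get, by rw [Fin.univ_val_map, List.ofFn_get]⟩

lemma eval_prod_form {d : ℕ} (p : Polynomial ℂ) (hp : p.Monic) (hdeg : p.natDegree = d) :
    ∃ x : Fin d → ℂ, p.roots = Multiset.map x (Finset.univ : Finset (Fin d)).val ∧
      ∀ z : ℂ, p.eval z = ∏ i, (z - x i) := by
  have hsplits : p.Splits := IsAlgClosed.splits p
  have hcard : Multiset.card p.roots = d := by
    rw [splits_iff_card_roots.mp hsplits, hdeg]
  obtain ⟨x, hx⟩ := multiset_exists_enum p.roots hcard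
  refine ⟨x, hx, fun z => ?_⟩
  conv_lhs => rw [← prod_multiset_X_sub_C_of_monic_of_roots_card_eq hp
    (by rw [hcard, hdeg])]
  rw [Polynomial.eval_multiset_prod, hx, Multiset.map_map, Multiset.map_map]
  rw [Finset.prod_eq_multiset_prod]
  congr 1
  apply Multiset.map_congr rfl
  intro i _
  simp

lemma root_bound {d : ℕ} (hd : 0 < d) (R' : ℝ) (hR' : 1 ≤ R') (p : Polynomial ℂ)
    (hp : p.Monic) (hdeg : p.natDegree = d) (hcoeff : ∀ k, ‖p.coeff k‖ ≤ R')
    (z : ℂ) (hz : p.eval z = 0) : ‖z‖ ≤ d * R' + 1 := by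
  have hd1 : (1:ℝ) ≤ d := by exact_mod_cast hd
  by_cases h1 : ‖z‖ ≤ 1
  · nlinarith
  push_neg at h1
  have hsum : p.eval z = ∑ i ∈ Finset.range (d + 1), p.coeff i * z ^ i := by
    rw [eval_eq_sum_range, hdeg]
  rw [Finset.sum_range_succ] at hsum
  have hcd : p.coeff d = 1 := by
    have := hp.coeff_natDegree
    rwa [hdeg] at this
  rw [hcd, one_mul, hz] at hsum
  have hzd : z ^ d = -∑ i ∈ Finset.range d, p.coeff i * z ^ i := by
    linear_combination -hsum
  have hnorm : ‖z‖ ^ d ≤ ∑ i ∈ Finset.range d, R' * ‖z‖ ^ (d - 1) := by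
    calc ‖z‖ ^ d = ‖z ^ d‖ := (norm_pow z d).symm
      _ = ‖∑ i ∈ Finset.range d, p.coeff i * z ^ i‖ := by rw [hzd, norm_neg]
      _ ≤ ∑ i ∈ Finset.range d, ‖p.coeff i * z ^ i‖ := norm_sum_le _ _
      _ ≤ ∑ i ∈ Finset.range d, R' * ‖z‖ ^ (d - 1) := by
          apply Finset.sum_le_sum
          intro i hi
          rw [norm_mul, norm_pow]
          have hi' := Finset.mem_range.mp hi
          have h3 : ‖z‖ ^ i ≤ ‖z‖ ^ (d - 1) :=
            pow_le_pow_right₀ (le_of_lt h1) (by omega : i ≤ d - 1)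
          have h4 : (0:ℝ) ≤ ‖z‖ ^ i := by positivity
          nlinarith [hcoeff i, norm_nonneg (p.coeff i)]
  rw [Finset.sum_const, Finset.card_range, nsmul_eq_mul] at hnorm
  have hzz : ‖z‖ ^ d = ‖z‖ ^ (d-1) * ‖z‖ := by
    rw [← pow_succ]
    congr 1
    omega
  rw [hzz] at hnorm
  have hzpow : (0:ℝ) < ‖z‖ ^ (d - 1) := by positivity
  have h5 : ‖z‖ ≤ d * R' := by
    by_contra hcon
    push_neg at hcon
    have := mul_lt_mul_of_pos_left hcon hzpow
    nlinarith
  linarith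

lemma eval_diff_bound {d : ℕ} (hd : 0 < d) (p q : Polynomial ℂ)
    (hp : p.Monic) (hq : q.Monic) (hpd : p.natDegree = d) (hqd : q.natDegree = d)
    (ε : ℝ) (hεk : ∀ k < d, ‖p.coeff k - q.coeff k‖ ≤ ε)
    (M : ℝ) (hM : 1 ≤ M) (z : ℂ) (hz : ‖z‖ ≤ M) :
    ‖p.eval z - q.eval z‖ ≤ d * ε * M ^ (d - 1) := by
  have hεnn : 0 ≤ ε := le_trans (norm_nonneg _) (hεk 0 hd)
  have hsump : p.eval z = ∑ i ∈ Finset.range (d + 1), p.coeff i * z ^ i := by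
    rw [eval_eq_sum_range, hpd]
  have hsumq : q.eval z = ∑ i ∈ Finset.range (d + 1), q.coeff i * z ^ i := by
    rw [eval_eq_sum_range, hqd]
  have hcdp : p.coeff d = 1 := by have := hp.coeff_natDegree; rwa [hpd] at this
  have hcdq : q.coeff d = 1 := by have := hq.coeff_natDegree; rwa [hqd] at this
  have hdiff : p.eval z - q.eval z
      = ∑ i ∈ Finset.range d, (p.coeff i - q.coeff i) * z ^ i := by
    rw [hsump, hsumq, Finset.sum_range_succ, Finset.sum_range_succ, hcdp, hcdq]
    have hAB : ∀ A B x : ℂ, (A + x) - (B + x) = A - B := by intros; ring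
    rw [hAB, ← Finset.sum_sub_distrib]
    exact Finset.sum_congr rfl (fun i _ => by ring)
  rw [hdiff]
  calc ‖∑ i ∈ Finset.range d, (p.coeff i - q.coeff i) * z ^ i‖
      ≤ ∑ i ∈ Finset.range d, ‖(p.coeff i - q.coeff i) * z ^ i‖ := norm_sum_le _ _
    _ ≤ ∑ i ∈ Finset.range d, ε * M ^ (d - 1) := by
        apply Finset.sum_le_sum
        intro i hi
        rw [norm_mul, norm_pow]
        have h3 : ‖z‖ ^ i ≤ M ^ (d - 1) := by
          calc ‖z‖ ^ i ≤ M ^ i := pow_le_pow_left₀ (norm_nonneg _) hz i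
            _ ≤ M ^ (d - 1) :=
              pow_le_pow_right₀ hM (by have := Finset.mem_range.mp hi; omega)
        have h4 : (0:ℝ) ≤ ‖z‖ ^ i := by positivity
        nlinarith [hεk i (Finset.mem_range.mp hi), norm_nonneg (p.coeff i - q.coeff i),
          pow_nonneg (le_trans zero_le_one hM) (d-1)]
    _ = d * ε * M ^ (d - 1) := by
        rw [Finset.sum_const, Finset.card_range, nsmul_eq_mul]; ring


lemma scale_select (S : Finset ℝ) (δ : ℝ) (hδ : 0 < δ) :
    ∃ t : ℝ, δ ≤ t ∧ t ≤ δ * 20 ^ S.card ∧ ∀ s ∈ S, s < t ∨ 20 * t ≤ s := by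
  classical
  set Bad : Finset ℕ := S.image (fun s => (⌊Real.logb 20 (s / δ)⌋).toNat) with hBad
  have hcard : Bad.card ≤ S.card := Finset.card_image_le
  have hex : ∃ j ∈ Finset.range (S.card + 1), j ∉ Bad := by
    by_contra hc
    push_neg at hc
    have hsub : Finset.range (S.card + 1) ⊆ Bad := fun j hj => hc j hj
    have := Finset.card_le_card hsub
    simp only [Finset.card_range] at this
    omega
  obtain ⟨j, hj, hjBad⟩ := hex
  have hjle : j ≤ S.card := Nat.lt_succ_iff.mp (Finset.mem_range.mp hj)
  have h20 : (1:ℝ) ≤ 20 := by norm_num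
  have hpowj : (1:ℝ) ≤ 20 ^ j := one_le_pow₀ h20
  refine ⟨δ * 20 ^ j, ?_, ?_, ?_⟩
  · nlinarith
  · have := pow_le_pow_right₀ h20 hjle
    nlinarith
  · intro s hs
    by_contra hcon
    push_neg at hcon
    obtain ⟨h1, h2⟩ := hcon
    have hpow : (0:ℝ) < δ * 20 ^ j := by positivity
    have hs0 : (20:ℝ) ^ j ≤ s / δ := by
      rw [le_div_iff₀ hδ]; linarith
    have hs1 : s / δ < 20 ^ (j + 1) := by
      rw [div_lt_iff₀ hδ, pow_succ]
      nlinarith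
    have hsdpos : (0:ℝ) < s / δ := by
      have : (0:ℝ) < 20 ^ j := by positivity
      linarith
    have hb : (1:ℝ) < 20 := by norm_num
    have e1 : ∀ k : ℕ, Real.logb 20 ((20:ℝ)^k) = k := by
      intro k
      rw [Real.logb_pow, Real.logb_self_eq_one hb]
      ring
    have hlow : (j : ℝ) ≤ Real.logb 20 (s / δ) := by
      have := Real.logb_le_logb_of_le hb (by positivity : (0:ℝ) < 20 ^ j) hs0
      rwa [e1 j] at this
    have hhigh : Real.logb 20 (s / δ) < (j : ℝ) + 1 := by
      have := Real.logb_lt_logb hb hsdpos hs1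
      rw [e1 (j+1)] at this
      push_cast at this
      linarith
    have hfloor : ⌊Real.logb 20 (s / δ)⌋ = (j : ℤ) := by
      rw [Int.floor_eq_iff]
      constructor
      · push_cast; exact hlow
      · push_cast; exact hhigh
    have : j ∈ Bad := by
      rw [hBad]
      exact Finset.mem_image.mpr ⟨s, hs, by rw [hfloor]; simp⟩
    exact hjBad this




/-- Core counting lemma ("baby Rouché"): if all points of `x` and `y` are within `u`
or beyond `10u` of `c`, and the monic products are `u^d/16`-close on the circles of
radius `2u` and `4u` about `c`, then at most as many `x`-points as `y`-points lie
in the ball of radius `u`. -/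
lemma count_le (d : ℕ) (u η : ℝ) (hu : 0 < u) (x y : Fin d → ℂ) (c : ℂ)
    (hx : ∀ i, dist (x i) c ≤ u ∨ 10 * u ≤ dist (x i) c)
    (hy : ∀ j, dist (y j) c ≤ u ∨ 10 * u ≤ dist (y j) c)
    (hfg : ∀ z : ℂ, (dist z c = 2 * u ∨ dist z c = 4 * u) →
      ‖(∏ i, (z - x i)) - ∏ j, (z - y j)‖ ≤ η)
    (hη : η ≤ u ^ d / 16) :
    (Finset.univ.filter fun i => dist (x i) c ≤ u).card ≤
      (Finset.univ.filter fun j => dist (y j) c ≤ u).card := by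
  classical
  by_contra hab
  push_neg at hab
  set a := (Finset.univ.filter fun i => dist (x i) c ≤ u).card with ha
  set b := (Finset.univ.filter fun j => dist (y j) c ≤ u).card with hb
  -- choose N
  obtain ⟨N, hN⟩ := pow_unbounded_of_one_lt (R := ℝ) ((9:ℝ)^d) (by norm_num : (1:ℝ) < 225/128)
  have hN0 : N ≠ 0 := by
    rintro rfl
    have : (1:ℝ) ≤ 9 ^ d := one_le_pow₀ (by norm_num)
    simp at hN
    linarith
  have hN1 : 1 ≤ N := Nat.one_le_iff_ne_zero.mpr hN0
  set ω : ℂ := Complex.exp (2 * ↑Real.pi * Complex.I / N) with hω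
  have hprim : IsPrimitiveRoot ω N := Complex.isPrimitiveRoot_exp N hN0
  have hωnorm : ∀ k : ℕ, ‖ω ^ k‖ = 1 := by
    intro k
    rw [norm_pow]
    have : ‖ω‖ = 1 := by
      rw [hω]
      rw [Complex.norm_exp]
      have : (2 * ↑Real.pi * Complex.I / N).re = 0 := by
        simp [Complex.div_re]
      rw [this, Real.exp_zero]
    rw [this, one_pow]
  -- scalar identity
  have key : ∀ t : ℝ, 0 < t → ∀ v : ℂ,
      ∏ k ∈ Finset.range N, (v - (t:ℂ) * ω ^ k) = v ^ N - ((t:ℂ)) ^ N := by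
    intro t ht v
    have hid := X_pow_sub_C_eq_prod hprim (Nat.pos_of_ne_zero hN0)
      (α := (t:ℂ)) (a := (t:ℂ)^N) rfl
    have := congrArg (Polynomial.eval v) hid
    simpa [Polynomial.eval_prod, mul_comm] using this.symm
  -- circle product identity
  have prodid : ∀ t : ℝ, 0 < t → ∀ ξ : ℂ,
      ∏ k ∈ Finset.range N, ‖(c + (t:ℂ) * ω ^ k) - ξ‖ = ‖(ξ - c) ^ N - ((t:ℂ)) ^ N‖ := by
    intro t ht ξ
    rw [← norm_prod]
    have h1 : ∏ k ∈ Finset.range N, ((c + (t:ℂ) * ω ^ k) - ξ)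
        = ∏ k ∈ Finset.range N, (-(((ξ - c) - (t:ℂ) * ω ^ k))) := by
      apply Finset.prod_congr rfl
      intro k _
      ring
    rw [h1]
    have h2 : ∏ k ∈ Finset.range N, (-(((ξ - c) - (t:ℂ) * ω ^ k)))
        = (-1)^N * ∏ k ∈ Finset.range N, (((ξ - c) - (t:ℂ) * ω ^ k)) := by
      calc ∏ k ∈ Finset.range N, (-(((ξ - c) - (t:ℂ) * ω ^ k)))
          = ∏ k ∈ Finset.range N, ((-1) * (((ξ - c) - (t:ℂ) * ω ^ k))) := by
            exact Finset.prod_congr rfl (fun k _ => by ring)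
        _ = (∏ _k ∈ Finset.range N, (-1:ℂ)) * ∏ k ∈ Finset.range N,
              (((ξ - c) - (t:ℂ) * ω ^ k)) := Finset.prod_mul_distrib
        _ = (-1)^N * ∏ k ∈ Finset.range N, (((ξ - c) - (t:ℂ) * ω ^ k)) := by
            rw [Finset.prod_const, Finset.card_range]
    rw [h2, key t ht (ξ - c), norm_mul, norm_pow, norm_neg, norm_one, one_pow, one_mul]
  -- basic facts about the circle points
  have hzdist : ∀ (t : ℝ), 0 < t → ∀ k : ℕ, dist (c + (t:ℂ) * ω ^ k) c = t := by
    intro t ht k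
    rw [dist_eq_norm]
    have : c + (t:ℂ) * ω ^ k - c = (t:ℂ) * ω ^ k := by ring
    rw [this, norm_mul, hωnorm k, mul_one, Complex.norm_real, Real.norm_eq_abs,
      abs_of_pos ht]
  have hAfact : ∀ (w : Fin d → ℂ) (t : ℝ), 0 < t →
      ∏ k ∈ Finset.range N, ‖∏ i, ((c + (t:ℂ) * ω ^ k) - w i)‖
        = ∏ i, ‖(w i - c) ^ N - ((t:ℂ)) ^ N‖ := by
    intro w t ht
    calc ∏ k ∈ Finset.range N, ‖∏ i, ((c + (t:ℂ) * ω ^ k) - w i)‖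
        = ∏ k ∈ Finset.range N, ∏ i, ‖(c + (t:ℂ) * ω ^ k) - w i‖ :=
          Finset.prod_congr rfl (fun k _ => norm_prod _ _)
      _ = ∏ i, ∏ k ∈ Finset.range N, ‖(c + (t:ℂ) * ω ^ k) - w i‖ := Finset.prod_comm
      _ = ∏ i, ‖(w i - c) ^ N - ((t:ℂ)) ^ N‖ :=
          Finset.prod_congr rfl (fun i _ => prodid t ht (w i))
  -- per-factor bounds
  have bound1 : ∀ (v : ℂ) (T : ℝ), 2*u ≤ T → T ≤ 4*u → (dist v c ≤ u ∨ 10*u ≤ dist v c) →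
      (1/2) * (if dist v c ≤ u then T^N else dist v c ^ N) ≤ ‖(v - c)^N - ((T:ℂ))^N‖ ∧
      ‖(v - c)^N - ((T:ℂ))^N‖ ≤ (3/2) * (if dist v c ≤ u then T^N else dist v c ^ N) := by
    intro v T hT1 hT2 hcase
    have hTpos : 0 < T := lt_of_lt_of_le (by positivity) hT1
    have hnorm : ‖v - c‖ = dist v c := (dist_eq_norm v c).symm
    have hvN : ‖(v-c)^N‖ = dist v c ^ N := by rw [norm_pow, hnorm]
    have hTN : ‖((T:ℂ))^N‖ = T^N := by
      rw [norm_pow, Complex.norm_real, Real.norm_eq_abs, abs_of_pos hTpos]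
    have htri1 : ‖(v - c)^N - ((T:ℂ))^N‖ ≤ dist v c ^ N + T^N := by
      calc ‖(v - c)^N - ((T:ℂ))^N‖ ≤ ‖(v-c)^N‖ + ‖((T:ℂ))^N‖ := norm_sub_le _ _
        _ = dist v c ^ N + T^N := by rw [hvN, hTN]
    have htri2 : T^N - dist v c ^ N ≤ ‖(v - c)^N - ((T:ℂ))^N‖ := by
      have h := norm_sub_norm_le (((T:ℂ))^N) ((v-c)^N)
      rw [hvN, hTN] at h
      calc T^N - dist v c ^ N ≤ ‖((T:ℂ))^N - (v-c)^N‖ := h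
        _ = ‖(v - c)^N - ((T:ℂ))^N‖ := norm_sub_rev _ _
    have htri3 : dist v c ^ N - T^N ≤ ‖(v - c)^N - ((T:ℂ))^N‖ := by
      have h := norm_sub_norm_le ((v-c)^N) (((T:ℂ))^N)
      rw [hvN, hTN] at h
      exact h
    rcases hcase with hin | hout
    · rw [if_pos hin]
      have hdN : dist v c ^ N ≤ u ^ N := pow_le_pow_left₀ dist_nonneg hin N
      have huT : 2 * u ^ N ≤ T^N := by
        have h2 : (2*u)^N ≤ T^N := pow_le_pow_left₀ (by positivity) hT1 N
        have h3 : ((2:ℝ)*u)^N = 2^N * u^N := mul_pow _ _ _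
        have h4 : (2:ℝ) ≤ 2^N := by
          calc (2:ℝ) = 2^1 := (pow_one 2).symm
            _ ≤ 2^N := pow_le_pow_right₀ one_le_two hN1
        nlinarith [pow_nonneg (le_of_lt hu) N]
      constructor
      · linarith
      · linarith
    · have hgt : ¬ dist v c ≤ u := by
        push_neg
        nlinarith
      rw [if_neg hgt]
      have hTd : 2 * T^N ≤ dist v c ^ N := by
        have h1 : (0:ℝ) ≤ 2/5 * dist v c := by nlinarith
        have h0 : T ≤ (2/5) * dist v c := by nlinarith
        have h2 : T^N ≤ ((2/5) * dist v c)^N := pow_le_pow_left₀ (le_of_lt hTpos) h0 N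
        have h3 : ((2/5:ℝ) * dist v c)^N = (2/5)^N * dist v c ^N := mul_pow _ _ _
        have h4 : ((2/5:ℝ))^N ≤ ((2/5):ℝ)^1 :=
          pow_le_pow_of_le_one (by norm_num) (by norm_num) hN1
        have h5 : (0:ℝ) ≤ dist v c ^ N := pow_nonneg dist_nonneg N
        nlinarith
      constructor
      · linarith
      · linarith
  -- product-level two-sided bounds
  have hprod : ∀ (w : Fin d → ℂ), (∀ i, dist (w i) c ≤ u ∨ 10*u ≤ dist (w i) c) →
      ∀ (T : ℝ), 2*u ≤ T → T ≤ 4*u →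
      ((1/2)^d * ∏ i, (if dist (w i) c ≤ u then T^N else dist (w i) c ^ N)
          ≤ ∏ i, ‖(w i - c)^N - ((T:ℂ))^N‖) ∧
      (∏ i, ‖(w i - c)^N - ((T:ℂ))^N‖
          ≤ (3/2)^d * ∏ i, (if dist (w i) c ≤ u then T^N else dist (w i) c ^ N)) := by
    intro w hw T hT1 hT2
    have hTpos : 0 < T := lt_of_lt_of_le (by positivity) hT1
    have hmnonneg : ∀ i : Fin d, (0:ℝ) ≤ (if dist (w i) c ≤ u then T^N else dist (w i) c ^ N) := by
      intro i
      split
      · positivity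
      · exact pow_nonneg dist_nonneg N
    constructor
    · calc (1/2)^d * ∏ i, (if dist (w i) c ≤ u then T^N else dist (w i) c ^ N)
          = ∏ i : Fin d, ((1/2) * (if dist (w i) c ≤ u then T^N else dist (w i) c ^ N)) := by
            rw [Finset.prod_mul_distrib, Finset.prod_const, Finset.card_univ, Fintype.card_fin]
        _ ≤ ∏ i, ‖(w i - c)^N - ((T:ℂ))^N‖ :=
            Finset.prod_le_prod (fun i _ => by positivity)
              (fun i _ => (bound1 (w i) T hT1 hT2 (hw i)).1)
    · calc ∏ i, ‖(w i - c)^N - ((T:ℂ))^N‖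
          ≤ ∏ i : Fin d, ((3/2) * (if dist (w i) c ≤ u then T^N else dist (w i) c ^ N)) :=
            Finset.prod_le_prod (fun i _ => norm_nonneg _)
              (fun i _ => (bound1 (w i) T hT1 hT2 (hw i)).2)
        _ = (3/2)^d * ∏ i, (if dist (w i) c ≤ u then T^N else dist (w i) c ^ N) := by
            rw [Finset.prod_mul_distrib, Finset.prod_const, Finset.card_univ, Fintype.card_fin]
  -- splitting the if-products
  set Px : ℝ := ∏ i ∈ Finset.univ.filter (fun i => ¬ dist (x i) c ≤ u), dist (x i) c ^ N with hPx
  set Py : ℝ := ∏ j ∈ Finset.univ.filter (fun j => ¬ dist (y j) c ≤ u), dist (y j) c ^ N with hPy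
  have hsplit : ∀ (w : Fin d → ℂ) (T : ℝ),
      ∏ i, (if dist (w i) c ≤ u then T^N else dist (w i) c ^ N)
        = (T^N) ^ (Finset.univ.filter fun i => dist (w i) c ≤ u).card
          * ∏ i ∈ Finset.univ.filter (fun i => ¬ dist (w i) c ≤ u), dist (w i) c ^ N := by
    intro w T
    rw [← Finset.prod_filter_mul_prod_filter_not Finset.univ (fun i => dist (w i) c ≤ u)]
    congr 1
    · rw [Finset.prod_congr rfl (fun i hi => if_pos (Finset.mem_filter.mp hi).2),
        Finset.prod_const]
    · exact Finset.prod_congr rfl (fun i hi => if_neg (Finset.mem_filter.mp hi).2)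
  have hPxpos : 0 < Px := by
    rw [hPx]
    apply Finset.prod_pos
    intro i hi
    have := (Finset.mem_filter.mp hi).2
    push_neg at this
    exact pow_pos (lt_trans hu this) N
  have hPypos : 0 < Py := by
    rw [hPy]
    apply Finset.prod_pos
    intro j hj
    have := (Finset.mem_filter.mp hj).2
    push_neg at this
    exact pow_pos (lt_trans hu this) N
  -- lower bounds for F and G on the circles
  have hcirc_lb : ∀ (w : Fin d → ℂ), (∀ i, dist (w i) c ≤ u ∨ 10*u ≤ dist (w i) c) →
      ∀ z : ℂ, 2*u ≤ dist z c → dist z c ≤ 4*u → u^d ≤ ∏ i, ‖z - w i‖ := by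
    intro w hw z h1 h2
    calc u^d = ∏ _i : Fin d, u := by
          rw [Finset.prod_const, Finset.card_univ, Fintype.card_fin]
      _ ≤ ∏ i, ‖z - w i‖ := by
          apply Finset.prod_le_prod (fun _ _ => le_of_lt hu)
          intro i _
          have heq : ‖z - w i‖ = dist z (w i) := (dist_eq_norm z (w i)).symm
          rw [heq]
          rcases hw i with hin | hout
          · have := dist_triangle z (w i) c
            have h3 : dist (w i) c ≤ u := hin
            nlinarith [dist_comm (w i) c ▸ h3]
          · have := dist_triangle (w i) z c
            have h4 : dist (w i) z = dist z (w i) := dist_comm _ _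
            nlinarith
  -- comparison of the two circle products
  have hcomp : ∀ (t : ℝ) (w1 w2 : Fin d → ℂ),
      (∀ i, dist (w1 i) c ≤ u ∨ 10*u ≤ dist (w1 i) c) →
      (∀ i, dist (w2 i) c ≤ u ∨ 10*u ≤ dist (w2 i) c) →
      2*u ≤ t → t ≤ 4*u →
      (∀ z : ℂ, dist z c = t → ‖(∏ i, (z - w1 i)) - (∏ i, (z - w2 i))‖ ≤ η) →
      ∏ k ∈ Finset.range N, ‖∏ i, ((c + (t:ℂ)*ω^k) - w1 i)‖
        ≤ (16/15)^N * ∏ k ∈ Finset.range N, ‖∏ i, ((c + (t:ℂ)*ω^k) - w2 i)‖ := by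
    intro t w1 w2 hw1 hw2 ht1 ht2 hdiff
    have htpos : 0 < t := lt_of_lt_of_le (by positivity) ht1
    have step : ∀ k ∈ Finset.range N, ‖∏ i, ((c + (t:ℂ)*ω^k) - w1 i)‖
        ≤ (16/15) * ‖∏ i, ((c + (t:ℂ)*ω^k) - w2 i)‖ := by
      intro k _
      set z := c + (t:ℂ)*ω^k with hz
      have hzc : dist z c = t := hzdist t htpos k
      have hGl : u^d ≤ ‖∏ i, (z - w2 i)‖ := by
        rw [norm_prod]
        exact hcirc_lb w2 hw2 z (by rw [hzc]; exact ht1) (by rw [hzc]; exact ht2)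
      have hFG := hdiff z hzc
      have h1 : ‖∏ i, (z - w1 i)‖ - ‖∏ i, (z - w2 i)‖ ≤ η :=
        le_trans (norm_sub_norm_le _ _) hFG
      have h2 : (0:ℝ) ≤ ‖∏ i, (z - w2 i)‖ := norm_nonneg _
      linarith
    calc ∏ k ∈ Finset.range N, ‖∏ i, ((c + (t:ℂ)*ω^k) - w1 i)‖
        ≤ ∏ k ∈ Finset.range N, ((16/15) * ‖∏ i, ((c + (t:ℂ)*ω^k) - w2 i)‖) :=
          Finset.prod_le_prod (fun k _ => norm_nonneg _) step
      _ = (16/15)^N * ∏ k ∈ Finset.range N, ‖∏ i, ((c + (t:ℂ)*ω^k) - w2 i)‖ := by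
          rw [Finset.prod_mul_distrib, Finset.prod_const, Finset.card_range]
  have h2u : (0:ℝ) < 2*u := by positivity
  have h4u : (0:ℝ) < 4*u := by positivity
  have h2u4u : (2:ℝ)*u ≤ 4*u := by linarith
  have E1 : (1/2)^d * ((((4*u):ℝ)^N)^a * Px)
      ≤ (16/15)^N * ((3/2)^d * ((((4*u):ℝ)^N)^b * Py)) := by
    have h1 := (hprod x hx (4*u) h2u4u (le_refl _)).1
    rw [hsplit x (4*u), ← ha] at h1
    have h2 := (hprod y hy (4*u) h2u4u (le_refl _)).2
    rw [hsplit y (4*u), ← hb] at h2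
    have h3 := hcomp (4*u) x y hx hy h2u4u (le_refl _) (fun z hz => hfg z (Or.inr hz))
    rw [hAfact x (4*u) h4u, hAfact y (4*u) h4u] at h3
    calc (1/2)^d * ((((4*u):ℝ)^N)^a * Px)
        ≤ ∏ i, ‖(x i - c)^N - ((((4*u):ℝ)):ℂ)^N‖ := h1
      _ ≤ (16/15)^N * ∏ i, ‖(y i - c)^N - ((((4*u):ℝ)):ℂ)^N‖ := h3
      _ ≤ (16/15)^N * ((3/2)^d * ((((4*u):ℝ)^N)^b * Py)) :=
          mul_le_mul_of_nonneg_left h2 (by positivity)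
  have E2 : (1/2)^d * ((((2*u):ℝ)^N)^b * Py)
      ≤ (16/15)^N * ((3/2)^d * ((((2*u):ℝ)^N)^a * Px)) := by
    have h1 := (hprod y hy (2*u) (le_refl _) h2u4u).1
    rw [hsplit y (2*u), ← hb] at h1
    have h2 := (hprod x hx (2*u) (le_refl _) h2u4u).2
    rw [hsplit x (2*u), ← ha] at h2
    have h3 := hcomp (2*u) y x hy hx (le_refl _) h2u4u
      (fun z hz => by rw [norm_sub_rev]; exact hfg z (Or.inl hz))
    rw [hAfact y (2*u) h2u, hAfact x (2*u) h2u] at h3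
    calc (1/2)^d * ((((2*u):ℝ)^N)^b * Py)
        ≤ ∏ i, ‖(y i - c)^N - ((((2*u):ℝ)):ℂ)^N‖ := h1
      _ ≤ (16/15)^N * ∏ i, ‖(x i - c)^N - ((((2*u):ℝ)):ℂ)^N‖ := h3
      _ ≤ (16/15)^N * ((3/2)^d * ((((2*u):ℝ)^N)^a * Px)) :=
          mul_le_mul_of_nonneg_left h2 (by positivity)
  have hmul := mul_le_mul E1 E2
    (mul_nonneg (by positivity) (mul_nonneg (by positivity) hPypos.le))
    (mul_nonneg (by positivity) (mul_nonneg (by positivity)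
      (mul_nonneg (by positivity) hPypos.le)))
  set m := a - b with hmdef
  have ham : a = b + m := by omega
  have hm1 : 1 ≤ m := by omega
  have hα : ((4*u):ℝ)^N = 2^N * ((2*u):ℝ)^N := by
    rw [show (4*u) = 2*(2*u) by ring, mul_pow]
  have step1 : (1/2:ℝ)^d*(1/2)^d*((((4*u):ℝ)^N))^m
      ≤ (16/15)^N*(16/15)^N*(3/2)^d*(3/2)^d*((((2*u):ℝ)^N))^m := by
    have hK : (0:ℝ) < ((((4*u):ℝ)^N))^b*((((2*u):ℝ)^N))^b*Px*Py :=
      mul_pos (mul_pos (mul_pos (by positivity) (by positivity)) hPxpos) hPypos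
    apply le_of_mul_le_mul_right _ hK
    calc (1/2:ℝ)^d*(1/2)^d*((((4*u):ℝ)^N))^m * (((((4*u):ℝ)^N))^b*((((2*u):ℝ)^N))^b*Px*Py)
        = ((1/2)^d * ((((4*u):ℝ)^N)^a * Px)) * ((1/2)^d * ((((2*u):ℝ)^N)^b * Py)) := by
          rw [ham, pow_add]; ring
      _ ≤ ((16/15)^N * ((3/2)^d * ((((4*u):ℝ)^N)^b * Py)))
            * ((16/15)^N * ((3/2)^d * ((((2*u):ℝ)^N)^a * Px))) := hmul
      _ = (16/15)^N*(16/15)^N*(3/2)^d*(3/2)^d*((((2*u):ℝ)^N))^m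
            * (((((4*u):ℝ)^N))^b*((((2*u):ℝ)^N))^b*Px*Py) := by
          rw [ham, pow_add]; ring
  have step2 : (1/2:ℝ)^d*(1/2)^d*(((2:ℝ)^N))^m
      ≤ (16/15)^N*(16/15)^N*(3/2)^d*(3/2)^d := by
    have hK : (0:ℝ) < ((((2*u):ℝ)^N))^m := by positivity
    apply le_of_mul_le_mul_right _ hK
    calc (1/2:ℝ)^d*(1/2)^d*(((2:ℝ)^N))^m * ((((2*u):ℝ)^N))^m
        = (1/2:ℝ)^d*(1/2)^d*((((4*u):ℝ)^N))^m := by rw [hα, mul_pow]; ring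
      _ ≤ (16/15)^N*(16/15)^N*(3/2)^d*(3/2)^d*((((2*u):ℝ)^N))^m := step1
      _ = (16/15)^N*(16/15)^N*(3/2)^d*(3/2)^d * ((((2*u):ℝ)^N))^m := by ring
  have h2N : (2:ℝ)^N ≤ ((2:ℝ)^N)^m := by
    calc (2:ℝ)^N = ((2:ℝ)^N)^1 := (pow_one _).symm
      _ ≤ ((2:ℝ)^N)^m := pow_le_pow_right₀ (one_le_pow₀ one_le_two) hm1
  have e1 : ((1/2:ℝ))^d*(1/2)^d = (1/4)^d := by rw [← mul_pow]; norm_num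
  have e2 : ((3/2:ℝ))^d*(3/2)^d = (9/4)^d := by rw [← mul_pow]; norm_num
  have e3 : ((16/15:ℝ))^N*(16/15)^N = (256/225)^N := by rw [← mul_pow]; norm_num
  have step3 : (1/4:ℝ)^d * 2^N ≤ (256/225)^N * (9/4)^d := by
    calc (1/4:ℝ)^d * 2^N = (1/2)^d*(1/2)^d*2^N := by rw [e1]
      _ ≤ (1/2)^d*(1/2)^d*(((2:ℝ)^N))^m := by
          have hpos : (0:ℝ) ≤ (1/2:ℝ)^d*(1/2)^d := by positivity
          nlinarith
      _ ≤ (16/15)^N*(16/15)^N*(3/2)^d*(3/2)^d := step2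
      _ = (256/225)^N * (9/4)^d := by rw [← e3, ← e2]; ring
  have e4 : (2:ℝ)^N = (225/128)^N * (256/225)^N := by rw [← mul_pow]; norm_num
  have e5 : ((9/4:ℝ))^d = 9^d * (1/4)^d := by rw [← mul_pow]; norm_num
  have hc : (0:ℝ) < (256/225)^N * (1/4)^d := by positivity
  have final : ((225/128:ℝ))^N ≤ 9^d := by
    apply le_of_mul_le_mul_right _ hc
    calc (225/128:ℝ)^N * ((256/225)^N * (1/4)^d) = (1/4)^d * 2^N := by rw [e4]; ring
      _ ≤ (256/225)^N * (9/4)^d := step3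
      _ = 9^d * ((256/225)^N * (1/4)^d) := by rw [e5]; ring
  linarith


end RootsHolderAux

open RootsHolderAux




/-- continuity of roots, 1/d-Hölder version. For monic complex polynomials
of degree d with coefficients in a fixed compact (norm ≤ R), the multisets of roots of p
and q can be matched so that matched roots differ by at most
C · (max coefficient difference)^(1/d). -/
theorem roots_holder_in_coefficients (d : ℕ) (hd : 0 < d) (R : ℝ) :
    ∃ C > 0, ∀ p q : Polynomial ℂ,
      p.Monic → q.Monic → p.natDegree = d → q.natDegree = d →
      (∀ k, ‖p.coeff k‖ ≤ R) → (∀ k, ‖q.coeff k‖ ≤ R) →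
      ∃ lam mu : Fin d → ℂ,
        p.roots = Multiset.map lam (Finset.univ : Finset (Fin d)).val ∧
        q.roots = Multiset.map mu (Finset.univ : Finset (Fin d)).val ∧
        ∀ i, ‖lam i - mu i‖ ≤
          C * ((Finset.range d).sup' (Finset.nonempty_range_iff.mpr hd.ne')
                (fun k => ‖p.coeff k - q.coeff k‖)) ^ ((d : ℝ)⁻¹) := by
  classical
  have hdR : (1:ℝ) ≤ d := by exact_mod_cast hd
  set R' : ℝ := max R 1 with hR'def
  have hR1 : (1:ℝ) ≤ R' := le_max_right _ _
  set B₀ : ℝ := d * R' + 1 with hB₀def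
  have hB₀1 : (1:ℝ) ≤ B₀ := by nlinarith
  set M : ℝ := B₀ + 1 with hMdef
  have hM1 : (1:ℝ) ≤ M := by nlinarith
  set c16 : ℝ := 16 * d * M ^ (d - 1) with hc16def
  have hc16pos : 0 < c16 := by positivity
  set W : ℝ := 20 ^ ((2*d) * (2*d)) with hWdef
  have hWpos : (0:ℝ) < W := by positivity
  have hW1 : (1:ℝ) ≤ W := one_le_pow₀ (by norm_num)
  set ε₀ : ℝ := ((4*W)⁻¹) ^ d / c16 with hε₀def
  have hε₀pos : 0 < ε₀ := by positivity
  set C₁ : ℝ := 12 * W * c16 ^ ((d:ℝ)⁻¹) with hC₁def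
  have hC₁pos : 0 < C₁ := by positivity
  set Cfull : ℝ := C₁ + (2*B₀) / ε₀ ^ ((d:ℝ)⁻¹) + 1 with hCdef
  have hCpos : 0 < Cfull := by positivity
  refine ⟨Cfull, hCpos, ?_⟩
  intro p q hp hq hpd hqd hpc hqc
  set ε : ℝ := (Finset.range d).sup' (Finset.nonempty_range_iff.mpr hd.ne')
      (fun k => ‖p.coeff k - q.coeff k‖) with hεdef
  have hεk : ∀ k < d, ‖p.coeff k - q.coeff k‖ ≤ ε := by
    intro k hk
    rw [hεdef]
    exact Finset.le_sup' (fun k => ‖p.coeff k - q.coeff k‖) (Finset.mem_range.mpr hk)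
  have hεnn : 0 ≤ ε := le_trans (norm_nonneg _) (hεk 0 hd)
  have hdinv_ne : ((d:ℝ))⁻¹ ≠ 0 := inv_ne_zero (by exact_mod_cast hd.ne')
  have hdinv_nn : (0:ℝ) ≤ ((d:ℝ))⁻¹ := by positivity
  -- coefficient bounds with R'
  have hpc' : ∀ k, ‖p.coeff k‖ ≤ R' := fun k => le_trans (hpc k) (le_max_left _ _)
  have hqc' : ∀ k, ‖q.coeff k‖ ≤ R' := fun k => le_trans (hqc k) (le_max_left _ _)
  -- enumerations
  obtain ⟨x, hxroots, hxeval⟩ := eval_prod_form p hp hpd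
  obtain ⟨y, hyroots, hyeval⟩ := eval_prod_form q hq hqd
  have hxB : ∀ i, ‖x i‖ ≤ B₀ := by
    intro i
    apply root_bound hd R' hR1 p hp hpd hpc'
    rw [hxeval]
    exact Finset.prod_eq_zero (Finset.mem_univ i) (sub_self _)
  have hyB : ∀ i, ‖y i‖ ≤ B₀ := by
    intro i
    apply root_bound hd R' hR1 q hq hqd hqc'
    rw [hyeval]
    exact Finset.prod_eq_zero (Finset.mem_univ i) (sub_self _)
  -- the trivial regime: ε = 0
  rcases eq_or_lt_of_le hεnn with hε0 | hεpos
  · -- ε = 0 : p = q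
    have hpq : p = q := by
      ext k
      rcases lt_trichotomy k d with hk | hk | hk
      · have := hεk k hk
        rw [← hε0] at this
        have : p.coeff k - q.coeff k = 0 := by
          rwa [norm_le_zero_iff] at this
        exact sub_eq_zero.mp this
      · subst hk
        have h1 : p.coeff k = 1 := by have := hp.coeff_natDegree; rwa [hpd] at this
        have h2 : q.coeff k = 1 := by have := hq.coeff_natDegree; rwa [hqd] at this
        rw [h1, h2]
      · have h1 : p.coeff k = 0 := coeff_eq_zero_of_natDegree_lt (by omega)
        have h2 : q.coeff k = 0 := coeff_eq_zero_of_natDegree_lt (by omega)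
        rw [h1, h2]
    refine ⟨x, x, hxroots, by rw [← hpq]; exact hxroots, ?_⟩
    intro i
    rw [sub_self, norm_zero, ← hε0, Real.zero_rpow hdinv_ne, mul_zero]
  -- now ε > 0
  rcases le_or_gt ε ε₀ with hεsmall | hεbig
  · -- main case
    set δ : ℝ := (c16 * ε) ^ ((d:ℝ)⁻¹) with hδdef
    have hδpos : 0 < δ := Real.rpow_pos_of_pos (by positivity) _
    have hδd : δ ^ d = c16 * ε := by
      rw [hδdef, ← Real.rpow_natCast ((c16 * ε) ^ ((d:ℝ)⁻¹)) d, ← Real.rpow_mul (by positivity),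
        inv_mul_cancel₀ (by exact_mod_cast hd.ne' : ((d:ℝ)) ≠ 0), Real.rpow_one]
    set w : Fin d ⊕ Fin d → ℂ := Sum.elim x y with hwdef
    set S : Finset ℝ := Finset.image
      (fun pr : (Fin d ⊕ Fin d) × (Fin d ⊕ Fin d) => dist (w pr.1) (w pr.2))
      Finset.univ with hSdef
    obtain ⟨t, ht1, ht2, ht3⟩ := scale_select S δ hδpos
    have htpos : 0 < t := lt_of_lt_of_le hδpos ht1
    have hScard : S.card ≤ (2*d) * (2*d) := by
      refine le_trans Finset.card_image_le ?_
      rw [Finset.card_univ]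
      simp only [Fintype.card_prod, Fintype.card_sum, Fintype.card_fin]
      exact Nat.le_of_eq (by ring)
    have hts : t ≤ δ * W := by
      refine le_trans ht2 ?_
      have : (20:ℝ) ^ S.card ≤ W := by
        rw [hWdef]
        exact pow_le_pow_right₀ (by norm_num) hScard
      nlinarith
    have hgap : ∀ a b : Fin d ⊕ Fin d,
        dist (w a) (w b) < t ∨ 20 * t ≤ dist (w a) (w b) := by
      intro a b
      exact ht3 _ (Finset.mem_image.mpr ⟨(a, b), Finset.mem_univ _, rfl⟩)
    -- 4t ≤ 1
    have hδsmall : δ ≤ (4*W)⁻¹ := by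
      have h1 : δ ^ d ≤ ((4*W)⁻¹) ^ d := by
        rw [hδd]
        calc c16 * ε ≤ c16 * ε₀ := by nlinarith
          _ = ((4*W)⁻¹) ^ d := by
            rw [hε₀def]
            field_simp
      exact le_of_pow_le_pow_left₀ hd.ne' (by positivity) h1
    have ht4 : 4 * t ≤ 1 := by
      have h1 : δ * W ≤ (4*W)⁻¹ * W := by nlinarith
      have h44 : (4*W)⁻¹ * W = 4⁻¹ := by field_simp
      have h45 : t ≤ 4⁻¹ := by linarith
      linarith
    -- the coefficient-difference bound on circles
    have hηt : (d:ℝ) * ε * M ^ (d - 1) ≤ t ^ d / 16 := by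
      have h1 : δ ^ d ≤ t ^ d := pow_le_pow_left₀ (le_of_lt hδpos) ht1 d
      rw [hδd, hc16def] at h1
      nlinarith
    -- the counting lemma, applied at an arbitrary root
    have hcount : ∀ a0 : Fin d ⊕ Fin d,
        (Finset.univ.filter fun i => dist (x i) (w a0) ≤ t).card
          = (Finset.univ.filter fun j => dist (y j) (w a0) ≤ t).card := by
      intro a0
      have hwB : ‖w a0‖ ≤ B₀ := by
        rcases a0 with i | j
        · exact hxB i
        · exact hyB j
      have hsx : ∀ i, dist (x i) (w a0) ≤ t ∨ 10 * t ≤ dist (x i) (w a0) := by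
        intro i
        rcases hgap (Sum.inl i) a0 with h | h
        · exact Or.inl (le_of_lt h)
        · right
          have hww : dist (w (Sum.inl i)) (w a0) = dist (x i) (w a0) := rfl
          rw [hww] at h
          linarith
      have hsy : ∀ j, dist (y j) (w a0) ≤ t ∨ 10 * t ≤ dist (y j) (w a0) := by
        intro j
        rcases hgap (Sum.inr j) a0 with h | h
        · exact Or.inl (le_of_lt h)
        · right
          have hww : dist (w (Sum.inr j)) (w a0) = dist (y j) (w a0) := rfl
          rw [hww] at h
          linarith
      have hclose : ∀ z : ℂ, (dist z (w a0) = 2 * t ∨ dist z (w a0) = 4 * t) →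
          ‖(∏ i, (z - x i)) - ∏ j, (z - y j)‖ ≤ (d:ℝ) * ε * M ^ (d - 1) := by
        intro z hz
        rw [← hxeval, ← hyeval]
        apply eval_diff_bound hd p q hp hq hpd hqd ε hεk M hM1
        have hzb : dist z (w a0) ≤ 4 * t := by rcases hz with h | h <;> linarith [htpos]
        calc ‖z‖ = dist z 0 := by rw [dist_zero_right]
          _ ≤ dist z (w a0) + dist (w a0) 0 := dist_triangle _ _ _
          _ ≤ 4 * t + B₀ := by
              rw [dist_zero_right]
              linarith [hwB]
          _ ≤ M := by rw [hMdef]; linarith [ht4]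
      exact le_antisymm
        (count_le d t _ htpos x y (w a0) hsx hsy hclose hηt)
        (count_le d t _ htpos y x (w a0) hsy hsx
          (fun z hz => by rw [norm_sub_rev]; exact hclose z hz) hηt)
    -- canonical representative of the t-cluster of y j
    have hymem : ∀ j : Fin d, j ∈ Finset.univ.filter (fun j' => dist (y j') (y j) < t) := by
      intro j
      simp only [Finset.mem_filter, Finset.mem_univ, true_and]
      rw [dist_self]; exact htpos
    set rep : Fin d → Fin d := fun j =>
      (Finset.univ.filter (fun j' => dist (y j') (y j) < t)).min' ⟨j, hymem j⟩ with hrepdef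
    have hrep_close : ∀ j, dist (y (rep j)) (y j) < t := by
      intro j
      have := Finset.min'_mem
        (Finset.univ.filter (fun j' => dist (y j') (y j) < t)) ⟨j, hymem j⟩
      exact (Finset.mem_filter.mp this).2
    have hytrans : ∀ j1 j2 j3 : Fin d, dist (y j1) (y j2) < t → dist (y j2) (y j3) < t →
        dist (y j1) (y j3) < t := by
      intro j1 j2 j3 h12 h23
      rcases hgap (Sum.inr j1) (Sum.inr j3) with h | h
      · exact h
      · exfalso
        have htri := dist_triangle (y j1) (y j2) (y j3)
        have hww : dist (w (Sum.inr j1)) (w (Sum.inr j3)) = dist (y j1) (y j3) := rfl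
        rw [hww] at h
        linarith
    have hmin'_congr : ∀ (s1 s2 : Finset (Fin d)) (h1 : s1.Nonempty) (h2 : s2.Nonempty),
        s1 = s2 → s1.min' h1 = s2.min' h2 := by
      rintro s1 s2 h1 h2 rfl
      rfl
    have hrep_congr : ∀ j j' : Fin d, dist (y j') (y j) < t → rep j' = rep j := by
      intro j j' hjj
      have hset : Finset.univ.filter (fun j'' => dist (y j'') (y j') < t)
          = Finset.univ.filter (fun j'' => dist (y j'') (y j) < t) := by
        ext j''
        simp only [Finset.mem_filter, Finset.mem_univ, true_and]
        constructor
        · intro h; exact hytrans j'' j' j h hjj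
        · intro h
          have hj'j : dist (y j) (y j') < t := by rw [dist_comm]; exact hjj
          exact hytrans j'' j j' h hj'j
      exact hmin'_congr _ _ _ _ hset
    have hrep_idem : ∀ j, rep (rep j) = rep j := fun j => hrep_congr j (rep j) (hrep_close j)
    -- Hall's condition
    set T : Fin d → Finset (Fin d) :=
      fun j => Finset.univ.filter (fun i => dist (x i) (y j) ≤ 3 * t) with hTdef
    have hall : ∀ S' : Finset (Fin d), S'.card ≤ (S'.biUnion T).card := by
      intro S'
      set Bx : Fin d → Finset (Fin d) :=
        fun r => Finset.univ.filter (fun i => dist (x i) (y r) ≤ t) with hBxdef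
      have h1 : S'.card = ∑ r ∈ S'.image rep, (S'.filter (fun j => rep j = r)).card :=
        Finset.card_eq_sum_card_image rep S'
      have h2 : ∀ r ∈ S'.image rep,
          (S'.filter (fun j => rep j = r)).card
            ≤ (Finset.univ.filter (fun j => dist (y j) (y r) ≤ t)).card := by
        intro r _
        apply Finset.card_le_card
        intro j hj
        obtain ⟨hjS, hjrep⟩ := Finset.mem_filter.mp hj
        simp only [Finset.mem_filter, Finset.mem_univ, true_and]
        have hc := hrep_close j
        rw [hjrep] at hc
        rw [dist_comm] at hc
        exact le_of_lt hc
      have h3 : ∀ r, (Finset.univ.filter (fun j => dist (y j) (y r) ≤ t)).card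
          = (Bx r).card := by
        intro r
        exact (hcount (Sum.inr r)).symm
      have h5 : ((S'.image rep).biUnion Bx).card = ∑ r ∈ S'.image rep, (Bx r).card := by
        apply Finset.card_biUnion
        intro r hr r' hr' hne
        obtain ⟨j₀, _, hj₀⟩ := Finset.mem_image.mp hr
        obtain ⟨j₁, _, hj₁⟩ := Finset.mem_image.mp hr'
        rw [Function.onFun, Finset.disjoint_left]
        intro i hiBr hiBr'
        have h6 : dist (x i) (y r) ≤ t := (Finset.mem_filter.mp hiBr).2
        have h7 : dist (x i) (y r') ≤ t := (Finset.mem_filter.mp hiBr').2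
        have h8 : dist (y r) (y r') < t := by
          rcases hgap (Sum.inr r) (Sum.inr r') with h | h
          · exact h
          · exfalso
            have htri := dist_triangle (y r) (x i) (y r')
            rw [dist_comm (y r) (x i)] at htri
            have hww : dist (w (Sum.inr r)) (w (Sum.inr r')) = dist (y r) (y r') := rfl
            rw [hww] at h
            linarith
        apply hne
        have hr0 : rep r = r := by rw [← hj₀, hrep_idem]
        have hr1 : rep r' = r' := by rw [← hj₁, hrep_idem]
        have h9 := hrep_congr r' r h8
        rw [hr0, hr1] at h9
        exact h9
      have h4 : (S'.image rep).biUnion Bx ⊆ S'.biUnion T := by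
        intro i hi
        obtain ⟨r, hr, hiBx⟩ := Finset.mem_biUnion.mp hi
        obtain ⟨j₀, hj₀S, hj₀rep⟩ := Finset.mem_image.mp hr
        refine Finset.mem_biUnion.mpr ⟨j₀, hj₀S, ?_⟩
        have hi1 : dist (x i) (y r) ≤ t := (Finset.mem_filter.mp hiBx).2
        have hi2 : dist (y r) (y j₀) < t := by
          rw [← hj₀rep]; exact hrep_close j₀
        simp only [hTdef, Finset.mem_filter, Finset.mem_univ, true_and]
        calc dist (x i) (y j₀) ≤ dist (x i) (y r) + dist (y r) (y j₀) := dist_triangle _ _ _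
          _ ≤ 3 * t := by linarith
      calc S'.card = ∑ r ∈ S'.image rep, (S'.filter (fun j => rep j = r)).card := h1
        _ ≤ ∑ r ∈ S'.image rep,
              (Finset.univ.filter (fun j => dist (y j) (y r) ≤ t)).card :=
            Finset.sum_le_sum h2
        _ = ∑ r ∈ S'.image rep, (Bx r).card := Finset.sum_congr rfl (fun r _ => h3 r)
        _ = ((S'.image rep).biUnion Bx).card := h5.symm
        _ ≤ (S'.biUnion T).card := Finset.card_le_card h4
    obtain ⟨f, hfinj, hfT⟩ := (Finset.all_card_le_biUnion_card_iff_exists_injective T).mp hall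
    have hfbij : Function.Bijective f := Finite.injective_iff_bijective.mp hfinj
    have hfdist : ∀ j, dist (x (f j)) (y j) ≤ 3 * t := by
      intro j
      have := hfT j
      exact (Finset.mem_filter.mp this).2
    refine ⟨fun j => x (f j), y, ?_, hyroots, ?_⟩
    · have hmapeq : Multiset.map (fun j => x (f j)) Finset.univ.val
          = Multiset.map x Finset.univ.val := by
        have h0 : (fun j => x (f j)) = x ∘ ⇑(Equiv.ofBijective f hfbij) := rfl
        rw [h0, ← Multiset.map_map, Multiset.map_univ_val_equiv]
      rw [hxroots, hmapeq]
    · intro j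
      have h1 : ‖x (f j) - y j‖ = dist (x (f j)) (y j) := (dist_eq_norm _ _).symm
      rw [h1]
      have h2 : 3 * t ≤ 3 * (δ * W) := by linarith
      have h3 : δ = c16 ^ ((d:ℝ)⁻¹) * ε ^ ((d:ℝ)⁻¹) := by
        rw [hδdef, Real.mul_rpow (le_of_lt hc16pos) hεnn]
      have hεr : (0:ℝ) ≤ ε ^ ((d:ℝ)⁻¹) := Real.rpow_nonneg hεnn _
      have hcr : (0:ℝ) ≤ c16 ^ ((d:ℝ)⁻¹) := Real.rpow_nonneg (le_of_lt hc16pos) _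
      have h4 : 3 * (δ * W) ≤ C₁ * ε ^ ((d:ℝ)⁻¹) := by
        rw [h3, hC₁def]
        nlinarith
      have h5 : C₁ * ε ^ ((d:ℝ)⁻¹) ≤ Cfull * ε ^ ((d:ℝ)⁻¹) := by
        have hqq : (0:ℝ) ≤ 2 * B₀ / ε₀ ^ ((d:ℝ)⁻¹) := by positivity
        have hCC : C₁ ≤ Cfull := by rw [hCdef]; linarith
        nlinarith
      linarith [hfdist j]
  · -- large ε case
    refine ⟨x, y, hxroots, hyroots, ?_⟩
    intro i
    have h1 : ‖x i - y i‖ ≤ 2 * B₀ := by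
      calc ‖x i - y i‖ ≤ ‖x i‖ + ‖y i‖ := norm_sub_le _ _
        _ ≤ 2 * B₀ := by linarith [hxB i, hyB i]
    have h2 : ε₀ ^ ((d:ℝ)⁻¹) ≤ ε ^ ((d:ℝ)⁻¹) :=
      Real.rpow_le_rpow (le_of_lt hε₀pos) (le_of_lt hεbig) hdinv_nn
    have h3 : 0 < ε₀ ^ ((d:ℝ)⁻¹) := Real.rpow_pos_of_pos hε₀pos _
    have h4 : 2 * B₀ ≤ (2*B₀) / ε₀ ^ ((d:ℝ)⁻¹) * ε ^ ((d:ℝ)⁻¹) := by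
      rw [div_mul_eq_mul_div, le_div_iff₀ h3]
      have hB0nn : (0:ℝ) ≤ 2 * B₀ := by nlinarith
      nlinarith
    have h5 : (2*B₀) / ε₀ ^ ((d:ℝ)⁻¹) * ε ^ ((d:ℝ)⁻¹) ≤ Cfull * ε ^ ((d:ℝ)⁻¹) := by
      have hεr : 0 ≤ ε ^ ((d:ℝ)⁻¹) := Real.rpow_nonneg hεnn _
      have : (2*B₀) / ε₀ ^ ((d:ℝ)⁻¹) ≤ Cfull := by
        rw [hCdef]
        nlinarith
      nlinarith
    linarith
end
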